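/- For a connected unweighted graph and any subset S of vertices, \sum_{e \in E(S, V\S)} B_e^2 \geq |S||V\S| / (|E(S, V\S)| \cdot n) = \Theta(S)^{-1}. In particular, some crossing edge e has B_e^2 \geq \Theta(S)^{-1} / |E(S, V\S)|. -/

import Mathlib

open Matrix BigOperators

lemma mp_unique {V : Type*} [Fintype V] [DecidableEq V] (A X Y : Matrix V V ℝ)
    (h1 : A*X*A = A) (h2 : X*A*X = X) (h3 : (A*X)ᵀ = A*X) (h4 : (X*A)ᵀ = X*A)
    (g1 : A*Y*A = A) (g2 : Y*A*Y = Y) (g3 : (A*Y)ᵀ = A*Y) (g4 : (Y*A)ᵀ = Y*A) :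
    X = Y := by
  have hAt1 : Aᵀ = Aᵀ*(A*Y) := by
    conv_lhs => rw [← g1]
    rw [Matrix.transpose_mul, g3]
  have hXY : X = X*(A*Y) := by
    calc X = X*(A*X) := by rw [← Matrix.mul_assoc, h2]
    _ = X*(A*X)ᵀ := by rw [h3]
    _ = X*(Xᵀ*Aᵀ) := by rw [Matrix.transpose_mul]
    _ = X*(Xᵀ*(Aᵀ*(A*Y))) := by rw [← hAt1]
    _ = (X*(Xᵀ*Aᵀ))*(A*Y) := by simp only [Matrix.mul_assoc]
    _ = (X*(A*X)ᵀ)*(A*Y) := by rw [Matrix.transpose_mul]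
    _ = (X*(A*X))*(A*Y) := by rw [h3]
    _ = X*(A*Y) := by rw [← Matrix.mul_assoc X A X, h2]
  have hAt2 : Aᵀ = (X*A)*Aᵀ := by
    conv_lhs => rw [← h1]
    rw [Matrix.mul_assoc, Matrix.transpose_mul, h4]
  have hYXY : Y = (X*A)*Y := by
    calc Y = (Y*A)*Y := g2.symm
    _ = (Y*A)ᵀ*Y := by rw [g4]
    _ = Aᵀ*(Yᵀ*Y) := by rw [Matrix.transpose_mul, Matrix.mul_assoc]
    _ = ((X*A)*Aᵀ)*(Yᵀ*Y) := by rw [← hAt2]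
    _ = (X*A)*((Aᵀ*Yᵀ)*Y) := by simp only [Matrix.mul_assoc]
    _ = (X*A)*((Y*A)ᵀ*Y) := by rw [Matrix.transpose_mul]
    _ = (X*A)*((Y*A)*Y) := by rw [g4]
    _ = (X*A)*Y := by rw [g2]
  conv_lhs => rw [hXY]
  conv_rhs => rw [hYXY]
  simp only [Matrix.mul_assoc]


/-- For a connected unweighted graph and a nontrivial vertex subset S,
∑_(e crossing) B_e² ≥ |S||V∖S|/(|E(S,V∖S)|·n); in particular some crossing edge has
B_e² ≥ |S||V∖S|/(n·|E(S,V∖S)|²). -/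
theorem sparse_cut_implies_large_biharmonic
    {V E : Type*} [Fintype V] [DecidableEq V] [Fintype E] [DecidableEq E]
    (vsrc vtgt : E → V) (hsimple : ∀ e, vsrc e ≠ vtgt e)
    (Bd : Matrix V E ℝ)
    (hBd : Bd = fun v e => (if v = vsrc e then (1:ℝ) else 0) - (if v = vtgt e then 1 else 0))
    (L : Matrix V V ℝ) (hLdef : L = Bd * Bdᵀ)
    (hconn : ∀ x : V → ℝ, L *ᵥ x = 0 → ∃ c : ℝ, x = Function.const V c)
    (Lp : Matrix V V ℝ)
    (hp1 : L * Lp * L = L) (hp2 : Lp * L * Lp = Lp)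
    (hp3 : (L * Lp)ᵀ = L * Lp) (hp4 : (Lp * L)ᵀ = Lp * L)
    (S : Finset V) (hS1 : S.Nonempty) (hS2 : S ≠ Finset.univ) :
    ((S.card : ℝ) * (Sᶜ.card : ℝ)) /
        (((Finset.univ.filter (fun e => ¬ (vsrc e ∈ S ↔ vtgt e ∈ S))).card : ℝ) *
          (Fintype.card V : ℝ))
      ≤ ∑ e ∈ Finset.univ.filter (fun e => ¬ (vsrc e ∈ S ↔ vtgt e ∈ S)),
          (Pi.single (vsrc e) 1 - Pi.single (vtgt e) 1) ⬝ᵥ ((Lp * Lp) *ᵥ (Pi.single (vsrc e) 1 - Pi.single (vtgt e) 1)) ∧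
    ∃ e ∈ Finset.univ.filter (fun e => ¬ (vsrc e ∈ S ↔ vtgt e ∈ S)),
      ((S.card : ℝ) * (Sᶜ.card : ℝ)) /
          ((Fintype.card V : ℝ) *
            ((Finset.univ.filter (fun e => ¬ (vsrc e ∈ S ↔ vtgt e ∈ S))).card : ℝ) ^ 2)
        ≤ (Pi.single (vsrc e) 1 - Pi.single (vtgt e) 1) ⬝ᵥ ((Lp * Lp) *ᵥ (Pi.single (vsrc e) 1 - Pi.single (vtgt e) 1)) := by
  classical
  set cut : Finset E := Finset.univ.filter (fun e => ¬ (vsrc e ∈ S ↔ vtgt e ∈ S)) with hcutdef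
  set nR : ℝ := (Fintype.card V : ℝ) with hnR
  have hV : 0 < Fintype.card V := Fintype.card_pos_iff.mpr ⟨hS1.choose⟩
  have hSc : Sᶜ.Nonempty := (Finset.compl_ne_univ_iff_nonempty Sᶜ).mp (by rwa [compl_compl])
  have hn0 : 0 < nR := by rw [hnR]; exact_mod_cast hV
  -- symmetry of L
  have hLsym : Lᵀ = L := by rw [hLdef, Matrix.transpose_mul, Matrix.transpose_transpose]
  -- symmetry of Lp
  have hPsym : Lp = Lpᵀ := by
    have e1 : (Lp*L)ᵀ = L * Lpᵀ := by rw [Matrix.transpose_mul, hLsym]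
    have e2 : (L*Lp)ᵀ = Lpᵀ * L := by rw [Matrix.transpose_mul, hLsym]
    have g1 : L * Lpᵀ * L = L := by
      have h := congrArg Matrix.transpose hp1
      simp only [Matrix.transpose_mul, hLsym] at h
      calc L * Lpᵀ * L = L * (Lpᵀ * L) := by rw [Matrix.mul_assoc]
      _ = L := by rw [← Matrix.mul_assoc] at h ⊢; exact h
    have g2 : Lpᵀ * L * Lpᵀ = Lpᵀ := by
      have h := congrArg Matrix.transpose hp2
      simp only [Matrix.transpose_mul, hLsym] at h
      calc Lpᵀ * L * Lpᵀ = Lpᵀ * (L * Lpᵀ) := by rw [Matrix.mul_assoc]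
      _ = Lpᵀ := by rw [← Matrix.mul_assoc] at h ⊢; exact h
    have g3 : (L * Lpᵀ)ᵀ = L * Lpᵀ := by
      rw [← e1, Matrix.transpose_transpose]; exact hp4.symm
    have g4 : (Lpᵀ * L)ᵀ = Lpᵀ * L := by
      rw [← e2, Matrix.transpose_transpose]; exact hp3.symm
    exact mp_unique L Lp Lpᵀ hp1 hp2 hp3 hp4 g1 g2 g3 g4
  -- L kills constants
  have hBdT1 : Bdᵀ *ᵥ (fun _ => (1:ℝ)) = 0 := by
    funext e
    simp [Matrix.mulVec, dotProduct, hBd, Matrix.transpose, sub_mul,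
      Finset.sum_sub_distrib]
  have hL1 : L *ᵥ (fun _ => (1:ℝ)) = 0 := by
    rw [hLdef, ← Matrix.mulVec_mulVec, hBdT1, Matrix.mulVec_zero]
  -- the test vector
  set z : V → ℝ := fun v => (if v ∈ S then 1 else 0) - (S.card : ℝ) / nR with hzdef
  have hchiS : ∑ v : V, (if v ∈ S then (1:ℝ) else 0) = S.card := by simp
  have hsumz : ∑ v : V, z v = 0 := by
    simp only [hzdef, Finset.sum_sub_distrib, hchiS, Finset.sum_const,
      Finset.card_univ, nsmul_eq_mul]
    field_simp
    rw [hnR]; ring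
  have hScompl : (Sᶜ.card : ℝ) = nR - S.card := by
    rw [hnR, Finset.card_compl, Nat.cast_sub (Finset.card_le_univ S)]
  have hzz : z ⬝ᵥ z = (S.card : ℝ) * (Sᶜ.card : ℝ) / nR := by
    have expand : ∀ v : V, z v * z v =
        (if v ∈ S then (1:ℝ) else 0) * (1 - 2 * ((S.card : ℝ)/nR)) + ((S.card : ℝ)/nR)^2 := by
      intro v; simp only [hzdef]; split <;> ring
    simp only [dotProduct, expand, Finset.sum_add_distrib, ← Finset.sum_mul, hchiS,
      Finset.sum_const, Finset.card_univ, nsmul_eq_mul]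
    rw [hScompl, hnR]
    have hk : ∀ a n : ℝ, n ≠ 0 → a*(1-2*(a/n)) + n*(a/n)^2 = a*(n-a)/n := by
      intro a n hn; field_simp; ring
    exact hk _ _ (by exact_mod_cast hV.ne')
  -- projection: (Lp*L) z = z
  have hproj : (Lp * L) *ᵥ z = z := by
    have hw : L *ᵥ (z - (Lp*L) *ᵥ z) = 0 := by
      rw [Matrix.mulVec_sub, Matrix.mulVec_mulVec, ← Matrix.mul_assoc, hp1, sub_self]
    obtain ⟨c, hc⟩ := hconn _ hw
    have hsum2 : ∑ v : V, ((Lp*L) *ᵥ z) v = 0 := by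
      have h1 : (fun _ => (1:ℝ)) ᵥ* (Lp*L) = 0 := by
        rw [← hp4, Matrix.vecMul_transpose, ← Matrix.mulVec_mulVec, hL1, Matrix.mulVec_zero]
      have h2 : (fun _ => (1:ℝ)) ⬝ᵥ ((Lp*L) *ᵥ z) = 0 := by
        rw [Matrix.dotProduct_mulVec, h1, zero_dotProduct]
      simpa [dotProduct] using h2
    have hcs : ∑ v : V, (z - (Lp*L) *ᵥ z) v = c * nR := by
      rw [hc]
      simp [Function.const, hnR, mul_comm]
    simp only [Pi.sub_apply, Finset.sum_sub_distrib, hsumz, hsum2, sub_zero] at hcs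
    have hc0 : c = 0 := by
      have := hcs.symm
      rcases mul_eq_zero.mp this with h | h
      · exact h
      · exact absurd h (ne_of_gt hn0)
    have : z - (Lp*L) *ᵥ z = 0 := by rw [hc, hc0]; funext v; simp [Function.const]
    have := sub_eq_zero.mp this
    exact this.symm
  -- key identity
  set g : V → ℝ := Lp *ᵥ z with hgdef
  set d : E → ℝ := Bdᵀ *ᵥ g with hddef
  have key : z ⬝ᵥ z = d ⬝ᵥ (Bdᵀ *ᵥ z) := by
    have e1 : z ⬝ᵥ z = z ⬝ᵥ ((Lp*L) *ᵥ z) := by rw [hproj]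
    rw [e1, ← Matrix.mulVec_mulVec, Matrix.dotProduct_mulVec]
    have e2 : z ᵥ* Lp = g := by rw [hPsym, Matrix.vecMul_transpose]
    rw [e2, hLdef, ← Matrix.mulVec_mulVec, Matrix.dotProduct_mulVec, ← Matrix.mulVec_transpose]
  -- entrywise values of Bdᵀ *ᵥ w
  have hentry : ∀ (w : V → ℝ) (e : E), (Bdᵀ *ᵥ w) e = w (vsrc e) - w (vtgt e) := by
    intro w e
    simp [Matrix.mulVec, dotProduct, hBd, Matrix.transpose, sub_mul, ite_mul,
      one_mul, zero_mul, Finset.sum_sub_distrib]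
  have hcrossz : ∀ e, (Bdᵀ *ᵥ z) e
      = (if vsrc e ∈ S then (1:ℝ) else 0) - (if vtgt e ∈ S then 1 else 0) := by
    intro e
    rw [hentry]
    simp only [hzdef]
    ring
  have hdelta : ∀ (a b : V) (w : V → ℝ),
      (Pi.single a (1:ℝ) - Pi.single b 1) ⬝ᵥ w = w a - w b := by
    intro a b w
    simp [dotProduct, Pi.sub_apply, sub_mul, Finset.sum_sub_distrib, Pi.single_apply,
      ite_mul, one_mul, zero_mul]
  -- restrict to the cut
  have hsumcut : z ⬝ᵥ z = ∑ e ∈ cut, d e * (Bdᵀ *ᵥ z) e := by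
    rw [key, dotProduct]
    refine (Finset.sum_subset (Finset.subset_univ cut) (fun e _ he => ?_)).symm
    have hiff : (vsrc e ∈ S ↔ vtgt e ∈ S) := by
      by_contra h; exact he (by simp [hcutdef, h])
    have h0 : (Bdᵀ *ᵥ z) e = 0 := by
      rw [hcrossz e]
      by_cases hv : vsrc e ∈ S
      · simp [hv, hiff.mp hv]
      · have ht : vtgt e ∉ S := fun h => hv (hiff.mpr h)
        simp [hv, ht]
    rw [h0, mul_zero]
  have step2 : z ⬝ᵥ z ≤ ∑ e ∈ cut, |d e| := by
    rw [hsumcut]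
    apply Finset.sum_le_sum
    intro e he
    have hmem : ¬ (vsrc e ∈ S ↔ vtgt e ∈ S) := by
      have := Finset.mem_filter.mp (hcutdef ▸ he)
      exact this.2
    rw [hcrossz e]
    by_cases hv : vsrc e ∈ S
    · have ht : vtgt e ∉ S := fun h => hmem ⟨fun _ => h, fun _ => hv⟩
      simp only [hv, if_true, ht, if_false, sub_zero, mul_one]
      exact le_abs_self _
    · have ht : vtgt e ∈ S := by
        by_contra h
        exact hmem ⟨fun h' => absurd h' hv, fun h' => absurd h' h⟩
      simp only [hv, if_false, ht, if_true, zero_sub, mul_neg, mul_one]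
      exact neg_le_abs _
  -- cut is nonempty
  have cutne : cut.Nonempty := by
    rw [Finset.nonempty_iff_ne_empty]
    intro hemp
    have hall : ∀ e, (vsrc e ∈ S ↔ vtgt e ∈ S) := by
      intro e; by_contra h
      have : e ∈ cut := by simp [hcutdef, h]
      rw [hemp] at this
      exact absurd this (Finset.notMem_empty e)
    set x : V → ℝ := fun v => if v ∈ S then 1 else 0 with hxdef
    have hBx : Bdᵀ *ᵥ x = 0 := by
      funext e
      rw [hentry]
      simp only [hxdef, Pi.zero_apply]
      by_cases hv : vsrc e ∈ S
      · simp [hv, (hall e).mp hv]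
      · have ht : vtgt e ∉ S := fun h => hv ((hall e).mpr h)
        simp [hv, ht]
    have hLx : L *ᵥ x = 0 := by
      rw [hLdef, ← Matrix.mulVec_mulVec, hBx, Matrix.mulVec_zero]
    obtain ⟨c, hc⟩ := hconn x hLx
    obtain ⟨v0, hv0⟩ := hS1
    obtain ⟨v1, hv1⟩ := hSc
    have e0 : x v0 = 1 := by simp [hxdef, hv0]
    have e1 : x v1 = 0 := by simp [hxdef, Finset.mem_compl.mp hv1]
    rw [hc] at e0 e1
    simp only [Function.const] at e0 e1
    rw [e0] at e1
    exact one_ne_zero e1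
  have hC : 0 < (cut.card : ℝ) := by exact_mod_cast Finset.card_pos.mpr cutne
  have hzzpos : 0 < z ⬝ᵥ z := by
    rw [hzz]
    apply div_pos (mul_pos ?_ ?_) hn0
    · exact_mod_cast Finset.card_pos.mpr hS1
    · exact_mod_cast Finset.card_pos.mpr hSc
  -- Cauchy-Schwarz on the cut
  have CS1 : (z ⬝ᵥ z)^2 ≤ (cut.card : ℝ) * ∑ e ∈ cut, (d e)^2 := by
    have h1 := Finset.sum_mul_sq_le_sq_mul_sq cut (fun _ => (1:ℝ)) (fun e => |d e|)
    simp only [one_mul, one_pow, Finset.sum_const, nsmul_eq_mul, mul_one, sq_abs] at h1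
    calc (z ⬝ᵥ z)^2 ≤ (∑ e ∈ cut, |d e|)^2 := by
          exact pow_le_pow_left₀ hzzpos.le step2 2
    _ ≤ (cut.card : ℝ) * ∑ e ∈ cut, (d e)^2 := h1
  -- pointwise Cauchy-Schwarz
  set Bfun : E → ℝ := fun e =>
      (Pi.single (vsrc e) 1 - Pi.single (vtgt e) 1) ⬝ᵥ
        ((Lp * Lp) *ᵥ (Pi.single (vsrc e) 1 - Pi.single (vtgt e) 1)) with hBfun
  have CS2 : ∀ e, (d e)^2 ≤ Bfun e * (z ⬝ᵥ z) := by
    intro e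
    set δ : V → ℝ := Pi.single (vsrc e) 1 - Pi.single (vtgt e) 1 with hδ
    have e3 : δ ᵥ* Lp = Lp *ᵥ δ := by
      conv_lhs => rw [hPsym]
      rw [Matrix.vecMul_transpose]
    have hde : d e = (Lp *ᵥ δ) ⬝ᵥ z := by
      have h1 : d e = g (vsrc e) - g (vtgt e) := by rw [hddef, hentry]
      have h2 : δ ⬝ᵥ g = g (vsrc e) - g (vtgt e) := hdelta _ _ g
      rw [h1, ← h2, hgdef, Matrix.dotProduct_mulVec, e3]
    have hBe : Bfun e = (Lp *ᵥ δ) ⬝ᵥ (Lp *ᵥ δ) := by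
      rw [hBfun]
      show δ ⬝ᵥ ((Lp * Lp) *ᵥ δ) = _
      rw [← Matrix.mulVec_mulVec, Matrix.dotProduct_mulVec, e3]
    have hcs := Finset.sum_mul_sq_le_sq_mul_sq Finset.univ (Lp *ᵥ δ) z
    have l1 : (Lp *ᵥ δ) ⬝ᵥ (Lp *ᵥ δ) = ∑ v, ((Lp *ᵥ δ) v)^2 := by
      simp [dotProduct, sq]
    have l2 : z ⬝ᵥ z = ∑ v : V, (z v)^2 := by simp [dotProduct, sq]
    rw [hde, hBe, l1, l2]
    exact hcs
  -- combine
  have main : z ⬝ᵥ z ≤ (cut.card : ℝ) * ∑ e ∈ cut, Bfun e := by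
    have h2 : ∑ e ∈ cut, (d e)^2 ≤ (∑ e ∈ cut, Bfun e) * (z ⬝ᵥ z) := by
      rw [Finset.sum_mul]
      exact Finset.sum_le_sum (fun e _ => CS2 e)
    have h3 : (z ⬝ᵥ z)^2 ≤ ((cut.card : ℝ) * ∑ e ∈ cut, Bfun e) * (z ⬝ᵥ z) := by
      calc (z ⬝ᵥ z)^2 ≤ (cut.card : ℝ) * ∑ e ∈ cut, (d e)^2 := CS1
      _ ≤ (cut.card : ℝ) * ((∑ e ∈ cut, Bfun e) * (z ⬝ᵥ z)) :=
          mul_le_mul_of_nonneg_left h2 hC.le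
      _ = ((cut.card : ℝ) * ∑ e ∈ cut, Bfun e) * (z ⬝ᵥ z) := by ring
    have h4 : (z ⬝ᵥ z) * (z ⬝ᵥ z) ≤ ((cut.card : ℝ) * ∑ e ∈ cut, Bfun e) * (z ⬝ᵥ z) := by
      rw [← pow_two]; exact h3
    exact le_of_mul_le_mul_right h4 hzzpos
  have G1 : ((S.card : ℝ) * (Sᶜ.card : ℝ)) / ((cut.card : ℝ) * nR) ≤ ∑ e ∈ cut, Bfun e := by
    rw [div_le_iff₀ (mul_pos hC hn0)]
    have h5 : (S.card : ℝ) * (Sᶜ.card : ℝ) / nR ≤ (cut.card : ℝ) * ∑ e ∈ cut, Bfun e := by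
      rw [← hzz]; exact main
    have h6 := (div_le_iff₀ hn0).mp h5
    calc (S.card : ℝ) * (Sᶜ.card : ℝ) ≤ (cut.card : ℝ) * (∑ e ∈ cut, Bfun e) * nR := h6
    _ = (∑ e ∈ cut, Bfun e) * ((cut.card : ℝ) * nR) := by ring
  refine ⟨G1, ?_⟩
  apply Finset.exists_le_of_sum_le cutne
  rw [Finset.sum_const, nsmul_eq_mul]
  have heq : (cut.card : ℝ) * ((S.card : ℝ) * (Sᶜ.card : ℝ) / (nR * (cut.card : ℝ)^2))
      = (S.card : ℝ) * (Sᶜ.card : ℝ) / ((cut.card : ℝ) * nR) := by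
    have hk : ∀ c a n : ℝ, c ≠ 0 → n ≠ 0 → c * (a / (n * c^2)) = a / (c * n) := by
      intro c a n hc hn; field_simp
    exact hk _ _ _ hC.ne' hn0.ne'
  rw [heq]
  exact G1
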